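/- Suppose e₋₁ + e₊₁ < 1 and δ_{p̃} := P(Ỹ = +1) − P(Ỹ = −1) ≠ 0, and set α* := 1 − (1 − e₋₁ − e₊₁)·δ_p/δ_{p̃}, where δ_p := P(Y = +1) − P(Y = −1). Then any minimizer f̃* ∈ argmin_{f∈ℱ} E_{D̃}[𝟙_{α*-peer}(f(X), Ỹ)] of the expected α*-weighted 0-1 peer risk over the noisy distribution satisfies f̃* ∈ argmin_{f∈ℱ} R_D(f). -/
import Mathlib


open MeasureTheory

lemma meas_split {Ω : Type*} [MeasurableSpace Ω] (μ : Measure Ω) [IsProbabilityMeasure μ]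
    {S A B : Set Ω} (hB : MeasurableSet B) (hU : S = A ∪ B) (hd : Disjoint A B) :
    (μ S).toReal = (μ A).toReal + (μ B).toReal := by
  rw [hU, measure_union hd hB, ENNReal.toReal_add (measure_ne_top μ A) (measure_ne_top μ B)]

lemma peer_key {Ω 𝒳 : Type*} [MeasurableSpace Ω] [MeasurableSpace 𝒳]
    (μ : Measure Ω) [IsProbabilityMeasure μ]
    (X : Ω → 𝒳) (Y Ytil : Ω → ℤ)
    (hmX : Measurable X) (hmY : Measurable Y) (hmYt : Measurable Ytil)
    (hYval : ∀ ω, Y ω = 1 ∨ Y ω = -1)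
    (hYtval : ∀ ω, Ytil ω = 1 ∨ Ytil ω = -1)
    (ep em p : ℝ)
    (hp : (μ {ω | Y ω = 1}).toReal = p) (hp0 : 0 < p) (hp1 : p < 1)
    (hq : (μ {ω | Y ω = -1}).toReal = 1 - p)
    (he11 : (μ {ω | Ytil ω = 1 ∧ Y ω = 1}).toReal = (1 - ep) * p)
    (hep' : (μ {ω | Ytil ω = -1 ∧ Y ω = 1}).toReal = ep * p)
    (hem' : (μ {ω | Ytil ω = 1 ∧ Y ω = -1}).toReal = em * (1 - p))
    (hemm : (μ {ω | Ytil ω = -1 ∧ Y ω = -1}).toReal = (1 - em) * (1 - p))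
    (hCI : ∀ (A : Set 𝒳) (y y' : ℤ),
      (μ {ω | Y ω = y}).toReal * (μ {ω | X ω ∈ A ∧ Ytil ω = y' ∧ Y ω = y}).toReal
        = (μ {ω | X ω ∈ A ∧ Y ω = y}).toReal * (μ {ω | Ytil ω = y' ∧ Y ω = y}).toReal)
    (α : ℝ)
    (hαδ : α * ((μ {ω | Ytil ω = 1}).toReal - (μ {ω | Ytil ω = -1}).toReal) = em - ep)
    (f : 𝒳 → ℤ) (hf : Measurable f) (hfv : ∀ x, f x = 1 ∨ f x = -1) :
    (μ {ω | f (X ω) ≠ Ytil ω}).toReal - α * ((μ.prod μ) {w | f (X w.1) ≠ Ytil w.2}).toReal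
      = (1 - em - ep) * (μ {ω | f (X ω) ≠ Y ω}).toReal
        + (ep * p + em * (1 - p) - α * (μ {ω | Ytil ω = 1}).toReal + (em - ep) * p) := by
  have hmf : Measurable (fun ω => f (X ω)) := hf.comp hmX
  -- measurability helpers
  have m1 : ∀ u : ℤ, MeasurableSet {ω | f (X ω) = u} := fun u => hmf (measurableSet_singleton u)
  have mY : ∀ u : ℤ, MeasurableSet {ω | Y ω = u} := fun u => hmY (measurableSet_singleton u)
  have mYt : ∀ u : ℤ, MeasurableSet {ω | Ytil ω = u} := fun u => hmYt (measurableSet_singleton u)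
  have m2 : ∀ u v : ℤ, MeasurableSet {ω | f (X ω) = u ∧ Y ω = v} :=
    fun u v => (m1 u).inter (mY v)
  have m3 : ∀ u v w : ℤ, MeasurableSet {ω | f (X ω) = u ∧ Ytil ω = v ∧ Y ω = w} :=
    fun u v w => (m1 u).inter ((mYt v).inter (mY w))
  -- abbreviations
  set a := (μ {ω | f (X ω) = -1 ∧ Y ω = 1}).toReal with ha
  set a' := (μ {ω | f (X ω) = 1 ∧ Y ω = 1}).toReal with ha'
  set b := (μ {ω | f (X ω) = 1 ∧ Y ω = -1}).toReal with hb
  set b' := (μ {ω | f (X ω) = -1 ∧ Y ω = -1}).toReal with hb'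
  -- p = a' + a
  have hpa : a' + a = p := by
    rw [← hp]
    refine (meas_split μ (m2 (-1) 1) ?_ ?_).symm
    · ext ω; rcases hfv (X ω) with h | h <;> simp [h]
    · rw [Set.disjoint_left]; rintro ω ⟨h1, -⟩ ⟨h2, -⟩; omega
  -- 1 - p = b + b'
  have hqb : b + b' = 1 - p := by
    rw [← hq]
    refine (meas_split μ (m2 (-1) (-1)) ?_ ?_).symm
    · ext ω; rcases hfv (X ω) with h | h <;> simp [h]
    · rw [Set.disjoint_left]; rintro ω ⟨h1, -⟩ ⟨h2, -⟩; omega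
  -- clean risk
  have hR : (μ {ω | f (X ω) ≠ Y ω}).toReal = a + b := by
    refine meas_split μ (m2 1 (-1)) ?_ ?_
    · ext ω; rcases hfv (X ω) with h | h <;> rcases hYval ω with h' | h' <;> simp [h, h']
    · rw [Set.disjoint_left]; rintro ω ⟨h1, -⟩ ⟨h2, -⟩; omega
  -- conditional independence consequences
  have c1 : (μ {ω | Y ω = 1}).toReal
        * (μ {ω | f (X ω) = -1 ∧ Ytil ω = 1 ∧ Y ω = 1}).toReal
      = (μ {ω | f (X ω) = -1 ∧ Y ω = 1}).toReal
        * (μ {ω | Ytil ω = 1 ∧ Y ω = 1}).toReal := hCI {x | f x = -1} 1 1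
  have c2 : (μ {ω | Y ω = 1}).toReal
        * (μ {ω | f (X ω) = 1 ∧ Ytil ω = -1 ∧ Y ω = 1}).toReal
      = (μ {ω | f (X ω) = 1 ∧ Y ω = 1}).toReal
        * (μ {ω | Ytil ω = -1 ∧ Y ω = 1}).toReal := hCI {x | f x = 1} 1 (-1)
  have c3 : (μ {ω | Y ω = -1}).toReal
        * (μ {ω | f (X ω) = -1 ∧ Ytil ω = 1 ∧ Y ω = -1}).toReal
      = (μ {ω | f (X ω) = -1 ∧ Y ω = -1}).toReal
        * (μ {ω | Ytil ω = 1 ∧ Y ω = -1}).toReal := hCI {x | f x = -1} (-1) 1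
  have c4 : (μ {ω | Y ω = -1}).toReal
        * (μ {ω | f (X ω) = 1 ∧ Ytil ω = -1 ∧ Y ω = -1}).toReal
      = (μ {ω | f (X ω) = 1 ∧ Y ω = -1}).toReal
        * (μ {ω | Ytil ω = -1 ∧ Y ω = -1}).toReal := hCI {x | f x = 1} (-1) (-1)
  rw [hp, he11] at c1
  rw [hp, hep'] at c2
  rw [hq, hem'] at c3
  rw [hq, hemm] at c4
  have hq0 : (0:ℝ) < 1 - p := by linarith
  have e1 : (μ {ω | f (X ω) = -1 ∧ Ytil ω = 1 ∧ Y ω = 1}).toReal = (1 - ep) * a := by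
    apply mul_left_cancel₀ (ne_of_gt hp0); rw [c1]; ring
  have e2 : (μ {ω | f (X ω) = 1 ∧ Ytil ω = -1 ∧ Y ω = 1}).toReal = ep * a' := by
    apply mul_left_cancel₀ (ne_of_gt hp0); rw [c2]; ring
  have e3 : (μ {ω | f (X ω) = -1 ∧ Ytil ω = 1 ∧ Y ω = -1}).toReal = em * b' := by
    apply mul_left_cancel₀ (ne_of_gt hq0); rw [c3]; ring
  have e4 : (μ {ω | f (X ω) = 1 ∧ Ytil ω = -1 ∧ Y ω = -1}).toReal = (1 - em) * b := by
    apply mul_left_cancel₀ (ne_of_gt hq0); rw [c4]; ring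
  -- noisy risk
  have hRt1 : (μ {ω | f (X ω) = -1 ∧ Ytil ω = 1}).toReal
      = (μ {ω | f (X ω) = -1 ∧ Ytil ω = 1 ∧ Y ω = 1}).toReal
        + (μ {ω | f (X ω) = -1 ∧ Ytil ω = 1 ∧ Y ω = -1}).toReal := by
    refine meas_split μ (m3 (-1) 1 (-1)) ?_ ?_
    · ext ω; rcases hYval ω with h | h <;> simp [h]
    · rw [Set.disjoint_left]; rintro ω ⟨-, -, h1⟩ ⟨-, -, h2⟩; omega
  have hRt2 : (μ {ω | f (X ω) = 1 ∧ Ytil ω = -1}).toReal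
      = (μ {ω | f (X ω) = 1 ∧ Ytil ω = -1 ∧ Y ω = 1}).toReal
        + (μ {ω | f (X ω) = 1 ∧ Ytil ω = -1 ∧ Y ω = -1}).toReal := by
    refine meas_split μ (m3 1 (-1) (-1)) ?_ ?_
    · ext ω; rcases hYval ω with h | h <;> simp [h]
    · rw [Set.disjoint_left]; rintro ω ⟨-, -, h1⟩ ⟨-, -, h2⟩; omega
  have hRt : (μ {ω | f (X ω) ≠ Ytil ω}).toReal
      = (μ {ω | f (X ω) = -1 ∧ Ytil ω = 1}).toReal
        + (μ {ω | f (X ω) = 1 ∧ Ytil ω = -1}).toReal := by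
    refine meas_split μ ((m1 1).inter (mYt (-1))) ?_ ?_
    · ext ω; rcases hfv (X ω) with h | h <;> rcases hYtval ω with h' | h' <;> simp [h, h']
    · rw [Set.disjoint_left]; rintro ω ⟨h1, -⟩ ⟨h2, -⟩; omega
  rw [hRt1, hRt2, e1, e2, e3, e4] at hRt
  -- marginals of f(X)
  have hs' : (μ {ω | f (X ω) = -1}).toReal = a + b' := by
    refine meas_split μ (m2 (-1) (-1)) ?_ ?_
    · ext ω; rcases hYval ω with h | h <;> simp [h]
    · rw [Set.disjoint_left]; rintro ω ⟨-, h1⟩ ⟨-, h2⟩; omega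
  have hs : (μ {ω | f (X ω) = 1}).toReal = a' + b := by
    refine meas_split μ (m2 1 (-1)) ?_ ?_
    · ext ω; rcases hYval ω with h | h <;> simp [h]
    · rw [Set.disjoint_left]; rintro ω ⟨-, h1⟩ ⟨-, h2⟩; omega
  -- peer term
  have hPeer : ((μ.prod μ) {w | f (X w.1) ≠ Ytil w.2}).toReal
      = (a + b') * (μ {ω | Ytil ω = 1}).toReal
        + (a' + b) * (μ {ω | Ytil ω = -1}).toReal := by
    have hU : {w : Ω × Ω | f (X w.1) ≠ Ytil w.2}
        = ({ω | f (X ω) = -1} ×ˢ {ω | Ytil ω = 1})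
          ∪ ({ω | f (X ω) = 1} ×ˢ {ω | Ytil ω = -1}) := by
      ext ⟨ω₁, ω₂⟩
      rcases hfv (X ω₁) with h | h <;> rcases hYtval ω₂ with h' | h' <;>
        simp [h, h', Set.mem_prod]
    have hd : Disjoint ({ω | f (X ω) = -1} ×ˢ {ω | Ytil ω = 1})
        ({ω | f (X ω) = 1} ×ˢ {ω | Ytil ω = -1}) := by
      rw [Set.disjoint_left]; rintro ⟨ω₁, ω₂⟩ ⟨h1, -⟩ ⟨h2, -⟩
      simp only [Set.mem_setOf_eq] at h1 h2; omega
    rw [hU, measure_union hd ((m1 1).prod (mYt (-1))), Measure.prod_prod, Measure.prod_prod,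
      ENNReal.toReal_add (by finiteness) (by finiteness), ENNReal.toReal_mul,
      ENNReal.toReal_mul, hs, hs']
  rw [hRt, hR, hPeer]
  linear_combination (b + p - a) * hαδ
    + (ep - α * (μ {ω | Ytil ω = -1}).toReal) * hpa
    + (em - α * (μ {ω | Ytil ω = 1}).toReal) * hqb

/-- **Theorem 4: α-weighted peer loss.**
With `α* = 1 - (1 - em - ep) δ_p / δ_p̃`, any minimizer of the expected `α*`-weighted 0-1 peer
risk over the noisy distribution within `ℱ` also minimizes the clean 0-1 risk over `ℱ`. -/
theorem peer_loss_stmt9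
    {Ω 𝒳 : Type*} [MeasurableSpace Ω] [MeasurableSpace 𝒳]
    (μ : Measure Ω) [IsProbabilityMeasure μ]
    (X : Ω → 𝒳) (Y Ytil : Ω → ℤ)
    (hmX : Measurable X) (hmY : Measurable Y) (hmYt : Measurable Ytil)
    (hYval : ∀ ω, Y ω = 1 ∨ Y ω = -1)
    (hYtval : ∀ ω, Ytil ω = 1 ∨ Ytil ω = -1)
    (ep em : ℝ)
    (p : ℝ) (hp : (μ {ω | Y ω = 1}).toReal = p) (hp0 : 0 < p) (hp1 : p < 1)
    (hep : (μ {ω | Ytil ω = -1 ∧ Y ω = 1}).toReal = ep * (μ {ω | Y ω = 1}).toReal)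
    (hem : (μ {ω | Ytil ω = 1 ∧ Y ω = -1}).toReal = em * (μ {ω | Y ω = -1}).toReal)
    -- `Ỹ` is conditionally independent of `X` given `Y`
    (hCI : ∀ (A : Set 𝒳) (y y' : ℤ),
      (μ {ω | Y ω = y}).toReal * (μ {ω | X ω ∈ A ∧ Ytil ω = y' ∧ Y ω = y}).toReal
        = (μ {ω | X ω ∈ A ∧ Y ω = y}).toReal * (μ {ω | Ytil ω = y' ∧ Y ω = y}).toReal)
    (he : em + ep < 1)
    (hδ : (μ {ω | Ytil ω = 1}).toReal - (μ {ω | Ytil ω = -1}).toReal ≠ 0)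
    (α : ℝ)
    (hα : α = 1 - (1 - em - ep) *
      (((μ {ω | Y ω = 1}).toReal - (μ {ω | Y ω = -1}).toReal)
        / ((μ {ω | Ytil ω = 1}).toReal - (μ {ω | Ytil ω = -1}).toReal)))
    (ℱ : Set (𝒳 → ℤ)) (hℱ : ∀ g ∈ ℱ, Measurable g ∧ ∀ x, g x = 1 ∨ g x = -1)
    (ftil : 𝒳 → ℤ) (hmem : ftil ∈ ℱ)
    (hmin : ∀ g ∈ ℱ,
      (μ {ω | ftil (X ω) ≠ Ytil ω}).toReal
          - α * ((μ.prod μ) {w | ftil (X w.1) ≠ Ytil w.2}).toReal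
        ≤ (μ {ω | g (X ω) ≠ Ytil ω}).toReal
          - α * ((μ.prod μ) {w | g (X w.1) ≠ Ytil w.2}).toReal) :
    ∀ g ∈ ℱ, (μ {ω | ftil (X ω) ≠ Y ω}).toReal ≤ (μ {ω | g (X ω) ≠ Y ω}).toReal := by
  have mY : ∀ u : ℤ, MeasurableSet {ω | Y ω = u} := fun u => hmY (measurableSet_singleton u)
  have mYt : ∀ u : ℤ, MeasurableSet {ω | Ytil ω = u} := fun u => hmYt (measurableSet_singleton u)
  have mYtY : ∀ u v : ℤ, MeasurableSet {ω | Ytil ω = u ∧ Y ω = v} :=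
    fun u v => (mYt u).inter (mY v)
  -- q = 1 - p
  have hq : (μ {ω | Y ω = -1}).toReal = 1 - p := by
    have hU : (Set.univ : Set Ω) = {ω | Y ω = 1} ∪ {ω | Y ω = -1} := by
      ext ω; rcases hYval ω with h | h <;> simp [h]
    have hd : Disjoint {ω | Y ω = 1} {ω | Y ω = -1} := by
      rw [Set.disjoint_left]; rintro ω h1 h2; simp only [Set.mem_setOf_eq] at h1 h2; omega
    have h := meas_split μ (mY (-1)) hU hd
    simp only [measure_univ, ENNReal.toReal_one] at h
    rw [hp] at h; linarith
  rw [hp] at hep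
  rw [hq] at hem
  -- conditional splits of {Y = 1} and {Y = -1} by Ytil
  have he11 : (μ {ω | Ytil ω = 1 ∧ Y ω = 1}).toReal = (1 - ep) * p := by
    have h : (μ {ω | Y ω = 1}).toReal
        = (μ {ω | Ytil ω = 1 ∧ Y ω = 1}).toReal + (μ {ω | Ytil ω = -1 ∧ Y ω = 1}).toReal := by
      refine meas_split μ (mYtY (-1) 1) ?_ ?_
      · ext ω; rcases hYtval ω with h | h <;> simp [h]
      · rw [Set.disjoint_left]; rintro ω ⟨h1, -⟩ ⟨h2, -⟩; omega
    rw [hp, hep] at h; linarith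
  have hemm : (μ {ω | Ytil ω = -1 ∧ Y ω = -1}).toReal = (1 - em) * (1 - p) := by
    have h : (μ {ω | Y ω = -1}).toReal
        = (μ {ω | Ytil ω = 1 ∧ Y ω = -1}).toReal + (μ {ω | Ytil ω = -1 ∧ Y ω = -1}).toReal := by
      refine meas_split μ (mYtY (-1) (-1)) ?_ ?_
      · ext ω; rcases hYtval ω with h | h <;> simp [h]
      · rw [Set.disjoint_left]; rintro ω ⟨h1, -⟩ ⟨h2, -⟩; omega
    rw [hq, hem] at h; linarith
  -- marginals of Ytil
  have hpt : (μ {ω | Ytil ω = 1}).toReal = (1 - ep) * p + em * (1 - p) := by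
    have h : (μ {ω | Ytil ω = 1}).toReal
        = (μ {ω | Ytil ω = 1 ∧ Y ω = 1}).toReal + (μ {ω | Ytil ω = 1 ∧ Y ω = -1}).toReal := by
      refine meas_split μ (mYtY 1 (-1)) ?_ ?_
      · ext ω; rcases hYval ω with h | h <;> simp [h]
      · rw [Set.disjoint_left]; rintro ω ⟨-, h1⟩ ⟨-, h2⟩; omega
    rw [he11, hem] at h; linarith
  have hqt : (μ {ω | Ytil ω = -1}).toReal = ep * p + (1 - em) * (1 - p) := by
    have h : (μ {ω | Ytil ω = -1}).toReal
        = (μ {ω | Ytil ω = -1 ∧ Y ω = 1}).toReal + (μ {ω | Ytil ω = -1 ∧ Y ω = -1}).toReal := by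
      refine meas_split μ (mYtY (-1) (-1)) ?_ ?_
      · ext ω; rcases hYval ω with h | h <;> simp [h]
      · rw [Set.disjoint_left]; rintro ω ⟨-, h1⟩ ⟨-, h2⟩; omega
    rw [hep, hemm] at h; linarith
  -- the key identity for α
  have hαδ : α * ((μ {ω | Ytil ω = 1}).toReal - (μ {ω | Ytil ω = -1}).toReal) = em - ep := by
    rw [hα, hp, hq]
    field_simp
    rw [hpt, hqt]
    ring
  -- apply the key lemma
  intro g hg
  have hft := hℱ ftil hmem
  have hgt := hℱ g hg
  have k1 := peer_key μ X Y Ytil hmX hmY hmYt hYval hYtval ep em p hp hp0 hp1 hq he11 hep hem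
    hemm hCI α hαδ ftil hft.1 hft.2
  have k2 := peer_key μ X Y Ytil hmX hmY hmYt hYval hYtval ep em p hp hp0 hp1 hq he11 hep hem
    hemm hCI α hαδ g hgt.1 hgt.2
  have hle := hmin g hg
  rw [k1, k2] at hle
  have h0 : (0:ℝ) < 1 - em - ep := by linarith
  nlinarith [hle, h0]
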